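/- Let f : ℝ^m × ℝ^n → ℝ^n be continuously differentiable with ‖∂f/∂h(x,h)‖₂ < 1 for all (x,h), and suppose ∂f/∂x(x, h*) = ∂f/∂h(x, h*) =: J at the fixed point h* = f(x, h*). Let F(x) = h*(x) be the implicit function and L : ℝ^n → ℝ a differentiable loss. Then the vector g = J^⊤ ∇L(h*) (the gradient of x ↦ L(f(x, h*)) with h* frozen) is a descent direction for x ↦ L(F(x)): the inner product ⟨∇(L∘F)(x), g⟩ ≥ 0, with equality only if g lies in the kernel of the relevant Jacobians. -/

import Mathlib

set_option synthInstance.maxHeartbeats 1000000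
set_option maxHeartbeats 1000000

open ContinuousLinearMap

lemma fixedpoint_unique {n : ℕ}
    (f : EuclideanSpace ℝ (Fin n) × EuclideanSpace ℝ (Fin n) → EuclideanSpace ℝ (Fin n))
    (hf : ContDiff ℝ 1 f)
    (hJh : ∀ (x h : EuclideanSpace ℝ (Fin n)), ‖fderiv ℝ (fun h' => f (x, h')) h‖ < 1)
    (x h₁ h₂ : EuclideanSpace ℝ (Fin n))
    (e₁ : f (x, h₁) = h₁) (e₂ : f (x, h₂) = h₂) : h₁ = h₂ := by
  by_contra hne
  set φ : EuclideanSpace ℝ (Fin n) → EuclideanSpace ℝ (Fin n) := fun h => f (x, h) with hφ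
  have hφd : ∀ h, DifferentiableAt ℝ φ h := fun h =>
    DifferentiableAt.comp h (hf.differentiable one_ne_zero (x, h))
      ((differentiableAt_const x).prodMk differentiableAt_id)
  have hcont : Continuous fun h => ‖fderiv ℝ φ h‖ := by
    have hrepr : ∀ h, fderiv ℝ φ h =
        (fderiv ℝ f (x, h)).comp (inr ℝ _ _) := by
      intro h
      exact ((hf.differentiable one_ne_zero (x, h)).hasFDerivAt.comp h
        (hasFDerivAt_prodMk_right x h)).fderiv
    have : Continuous fun h : EuclideanSpace ℝ (Fin n) =>
        (fderiv ℝ f (x, h)).comp (inr ℝ _ _) :=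
      Continuous.clm_comp ((hf.continuous_fderiv one_ne_zero).comp
        (continuous_const.prodMk continuous_id)) continuous_const
    have heq : (fun h => ‖fderiv ℝ φ h‖) = fun h =>
        ‖(fderiv ℝ f (x, h)).comp (inr ℝ (EuclideanSpace ℝ (Fin n)) (EuclideanSpace ℝ (Fin n)))‖ :=
      funext fun h => by rw [hrepr]
    rw [heq]
    exact this.norm
  have hcmp : IsCompact (segment ℝ h₁ h₂) := by
    rw [segment_eq_image ℝ h₁ h₂]
    exact isCompact_Icc.image (by fun_prop)
  obtain ⟨h₀, h₀s, hmax⟩ := hcmp.exists_isMaxOn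
    ⟨h₁, left_mem_segment ℝ h₁ h₂⟩ (hcont.continuousOn)
  have hC : ‖fderiv ℝ φ h₀‖ < 1 := hJh x h₀
  have hbound := (convex_segment h₁ h₂).norm_image_sub_le_of_norm_fderiv_le (f := φ)
    (fun h _ => hφd h) (fun h hs => hmax hs)
    (left_mem_segment ℝ h₁ h₂) (right_mem_segment ℝ h₁ h₂)
  rw [hφ] at hbound
  simp only [e₁, e₂] at hbound
  have hpos : 0 < ‖h₂ - h₁‖ := by
    rw [norm_pos_iff, sub_ne_zero]; exact fun h => hne h.symm
  nlinarith [hbound, hC, hpos]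

open scoped RealInnerProductSpace

/-- Local abbreviation for Euclidean space. -/
abbrev Euc (n : ℕ) := EuclideanSpace ℝ (Fin n)


open scoped RealInnerProductSpace

/-- Descent-direction property of the gradient computed at the fixed point: if `f : ℝⁿ × ℝⁿ → ℝⁿ`
is `C¹` with `‖∂f/∂h‖ < 1` everywhere, `F(x) = h*(x)` is the fixed point `h* = f(x,h*)`, and at
the fixed point the two partial Jacobians coincide, `∂f/∂x = ∂f/∂h = J`, then for a
differentiable loss `L`, the vector `g = Jᵀ ∇L(h*)` (the gradient of `x ↦ L(f(x,h*))` with `h*`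
frozen) satisfies `⟨∇(L∘F)(x), g⟩ ≥ 0`, with equality only if `g = 0` (i.e. `∇L(h*)` lies in the
kernel of the relevant Jacobian). -/
theorem stmt_10 (n : ℕ)
    (f : EuclideanSpace ℝ (Fin n) × EuclideanSpace ℝ (Fin n) → EuclideanSpace ℝ (Fin n))
    (hf : ContDiff ℝ 1 f)
    (hJh : ∀ (x h : EuclideanSpace ℝ (Fin n)), ‖fderiv ℝ (fun h' => f (x, h')) h‖ < 1)
    (F : EuclideanSpace ℝ (Fin n) → EuclideanSpace ℝ (Fin n))
    (hfix : ∀ x, F x = f (x, F x))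
    (L : EuclideanSpace ℝ (Fin n) → ℝ)
    (hL : Differentiable ℝ L)
    (x : EuclideanSpace ℝ (Fin n))
    (J : EuclideanSpace ℝ (Fin n) →L[ℝ] EuclideanSpace ℝ (Fin n))
    (hJ_h : fderiv ℝ (fun h' => f (x, h')) (F x) = J)
    (hJ_x : fderiv ℝ (fun x' => f (x', F x)) x = J) :
    0 ≤ ⟪gradient (fun y => L (F y)) x,
          (ContinuousLinearMap.adjoint J) (gradient L (F x))⟫ ∧
    (⟪gradient (fun y => L (F y)) x,
          (ContinuousLinearMap.adjoint J) (gradient L (F x))⟫ = 0 →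
      (ContinuousLinearMap.adjoint J) (gradient L (F x)) = 0) := by
  classical
  have hJnorm : ‖J‖ < 1 := by rw [← hJ_h]; exact hJh x (F x)
  -- the unit 1 - J
  set u : (Euc n →L[ℝ] Euc n)ˣ := Units.oneSub J hJnorm with hu
  have huval : (u : Euc n →L[ℝ] Euc n) = 1 - J := rfl
  have hui : ∀ b : Euc n, (↑u⁻¹ : Euc n →L[ℝ] Euc n) (b - J b) = b := by
    intro b
    have h1 : ((↑u⁻¹ * ↑u : Euc n →L[ℝ] Euc n)) b = b := by rw [u.inv_mul]; rfl
    simpa [huval, mul_apply, sub_apply, one_apply] using h1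
  have huv : ∀ b : Euc n, (↑u : Euc n →L[ℝ] Euc n) ((↑u⁻¹ : Euc n →L[ℝ] Euc n) b) = b := by
    intro b
    rw [← ContinuousLinearMap.mul_apply, u.mul_inv, ContinuousLinearMap.one_apply]
  -- total derivative of f at (x, F x)
  set Df := fderiv ℝ f (x, F x) with hDf
  have hDfs : HasStrictFDerivAt f Df (x, F x) := by
    rw [hDf]; exact hf.contDiffAt.hasStrictFDerivAt one_ne_zero
  have hinl : Df.comp (inl ℝ (Euc n) (Euc n)) = J := by
    have h1 : HasFDerivAt (fun x' => f (x', F x)) (Df.comp (inl ℝ (Euc n) (Euc n))) x :=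
      hDfs.hasFDerivAt.comp x (hasFDerivAt_prodMk_left x (F x))
    rw [← hJ_x, h1.fderiv]
  have hinr : Df.comp (inr ℝ (Euc n) (Euc n)) = J := by
    have h1 : HasFDerivAt (fun h' => f (x, h')) (Df.comp (inr ℝ (Euc n) (Euc n))) (F x) :=
      hDfs.hasFDerivAt.comp (F x) (hasFDerivAt_prodMk_right x (F x))
    rw [← hJ_h, h1.fderiv]
  have hDfp : ∀ p : Euc n × Euc n, Df p = J p.1 + J p.2 := by
    intro p
    have hsplit : Df p = Df (p.1, 0) + Df (0, p.2) := by
      rw [← map_add]; congr 1; simp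
    rw [hsplit]
    have e1 : Df (p.1, 0) = J p.1 := by rw [← hinl]; rfl
    have e2 : Df (0, p.2) = J p.2 := by rw [← hinr]; rfl
    rw [e1, e2]
  -- the linear maps T and S
  set T : (Euc n × Euc n) →L[ℝ] (Euc n × Euc n) :=
    (fst ℝ (Euc n) (Euc n)).prod (snd ℝ (Euc n) (Euc n) - J.comp (fst ℝ (Euc n) (Euc n)) - J.comp (snd ℝ (Euc n) (Euc n))) with hT
  set S : (Euc n × Euc n) →L[ℝ] (Euc n × Euc n) :=
    (fst ℝ (Euc n) (Euc n)).prod ((↑u⁻¹ : Euc n →L[ℝ] Euc n).comp (snd ℝ (Euc n) (Euc n) + J.comp (fst ℝ (Euc n) (Euc n)))) with hS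
  have hTapp : ∀ p : Euc n × Euc n, T p = (p.1, p.2 - J p.1 - J p.2) := fun p => by
    simp [hT, prod_apply, sub_apply, comp_apply]
  have hSapp : ∀ p : Euc n × Euc n, S p = (p.1, (↑u⁻¹ : Euc n →L[ℝ] Euc n) (p.2 + J p.1)) := fun p => by
    simp [hS, prod_apply, add_apply, comp_apply]
  have hST : Function.LeftInverse S T := by
    intro p
    rw [hTapp, hSapp]
    have h2 : (p.2 - J p.1 - J p.2) + J p.1 = p.2 - J p.2 := by abel
    simp only [h2, hui p.2]
  have hTS : Function.RightInverse S T := by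
    intro p
    rw [hSapp, hTapp]
    have h3 : ∀ w : Euc n, w - J p.1 - J w = (w - J w) - J p.1 := fun w => by abel
    rw [h3, show ((↑u⁻¹ : Euc n →L[ℝ] Euc n) (p.2 + J p.1) - J ((↑u⁻¹ : Euc n →L[ℝ] Euc n) (p.2 + J p.1))) =
        (↑u : Euc n →L[ℝ] Euc n) ((↑u⁻¹ : Euc n →L[ℝ] Euc n) (p.2 + J p.1)) from by
          rw [huval]; simp [sub_apply, one_apply], huv]
    simp [add_sub_cancel_right]
  set T' : (Euc n × Euc n) ≃L[ℝ] (Euc n × Euc n) := ContinuousLinearEquiv.equivOfInverse T S hST hTS with hT'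
  -- Φ and its strict derivative
  set Φ : Euc n × Euc n → Euc n × Euc n := fun p => (p.1, p.2 - f p) with hΦdef
  have hΦs : HasStrictFDerivAt Φ (T' : (Euc n × Euc n) →L[ℝ] (Euc n × Euc n)) (x, F x) := by
    have h1 : HasStrictFDerivAt Φ ((fst ℝ (Euc n) (Euc n)).prod ((snd ℝ (Euc n) (Euc n)) - Df)) (x, F x) :=
      hasStrictFDerivAt_fst.prodMk (hasStrictFDerivAt_snd.sub hDfs)
    have h2 : (fst ℝ (Euc n) (Euc n)).prod ((snd ℝ (Euc n) (Euc n)) - Df) = (T' : (Euc n × Euc n) →L[ℝ] (Euc n × Euc n)) := by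
      refine ContinuousLinearMap.ext fun p => ?_
      have : (T' : (Euc n × Euc n) →L[ℝ] (Euc n × Euc n)) p = T p := rfl
      rw [this, hTapp]
      simp [prod_apply, sub_apply, hDfp p]
      abel
    rw [← h2]; exact h1
  have hΦx : Φ (x, F x) = (x, 0) := by
    simp only [hΦdef]
    rw [← hfix x]
    simp
  set g : Euc n × Euc n → Euc n × Euc n := hΦs.localInverse Φ _ _ with hg
  have hgright : ∀ᶠ y in nhds (x, (0 : Euc n)), Φ (g y) = y := by
    have := hΦs.eventually_right_inverse
    rwa [hΦx] at this
  have htend : Filter.Tendsto (fun x' : Euc n => ((x', (0 : Euc n)) : Euc n × Euc n)) (nhds x)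
      (nhds ((x, (0 : Euc n)) : Euc n × Euc n)) := by
    exact (continuous_id.prodMk continuous_const).tendsto x
  have hFG : ∀ᶠ x' in nhds x, F x' = (g (x', 0)).2 := by
    filter_upwards [htend.eventually hgright] with x' hx'
    have ha : (g (x', (0 : Euc n))).1 = x' := congrArg Prod.fst hx'
    have hb : (g (x', (0 : Euc n))).2 - f (g (x', 0)) = 0 := by
      have := congrArg Prod.snd hx'
      simpa [hΦdef] using this
    have hfp : f (x', (g (x', (0 : Euc n))).2) = (g (x', 0)).2 := by
      have hpair : g (x', (0 : Euc n)) = (x', (g (x', 0)).2) := Prod.ext ha rfl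
      rw [← hpair]
      exact (sub_eq_zero.mp hb).symm
    exact fixedpoint_unique f hf hJh x' (F x') ((g (x', 0)).2) (hfix x').symm hfp
  -- derivative of F
  have hgs : HasStrictFDerivAt g (T'.symm : (Euc n × Euc n) →L[ℝ] (Euc n × Euc n)) (x, (0 : Euc n)) := by
    have := hΦs.to_localInverse
    rwa [hΦx] at this
  set A : Euc n →L[ℝ] Euc n := (snd ℝ (Euc n) (Euc n)).comp ((T'.symm : (Euc n × Euc n) →L[ℝ] (Euc n × Euc n)).comp (inl ℝ (Euc n) (Euc n)))
    with hA
  have hG : HasFDerivAt (fun x' : Euc n => (g (x', 0)).2) A x := by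
    have h1 : HasFDerivAt (fun x' : Euc n => g (x', 0))
        ((T'.symm : (Euc n × Euc n) →L[ℝ] (Euc n × Euc n)).comp (inl ℝ (Euc n) (Euc n))) x :=
      hgs.hasFDerivAt.comp x (hasFDerivAt_prodMk_left x (0 : Euc n))
    exact h1.snd
  have hF : HasFDerivAt F A x := hG.congr_of_eventuallyEq hFG
  have hAapp : ∀ a : Euc n, A a = (↑u⁻¹ : Euc n →L[ℝ] Euc n) (J a) := by
    intro a
    have h1 : T'.symm = ContinuousLinearEquiv.equivOfInverse S T hTS hST :=
      ContinuousLinearEquiv.symm_equivOfInverse T S hST hTS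
    have h2 : A a = (T'.symm ((a, 0) : Euc n × Euc n)).2 := rfl
    rw [h2, h1]
    show (S ((a, (0 : Euc n)) : Euc n × Euc n)).2 = _
    rw [hSapp]
    simp
  -- chain rule and gradient identities
  have hLF : HasFDerivAt (fun y => L (F y)) ((fderiv ℝ L (F x)).comp A) x :=
    (hL (F x)).hasFDerivAt.comp x hF
  have key : ∀ (φ : Euc n → ℝ) (y w : Euc n), ⟪gradient φ y, w⟫ = fderiv ℝ φ y w := by
    intro φ y w
    rw [gradient]
    exact InnerProductSpace.toDual_symm_apply
  set δ : Euc n := gradient L (F x) with hδ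
  set v : Euc n := ContinuousLinearMap.adjoint J δ with hv
  set w : Euc n := (↑u⁻¹ : Euc n →L[ℝ] Euc n) v with hw
  have hcomm : (J : Euc n →L[ℝ] Euc n) * ↑u⁻¹ = ↑u⁻¹ * J := by
    have c1 : Commute J (u : Euc n →L[ℝ] Euc n) := by
      rw [huval]
      exact (Commute.one_right J).sub_right (Commute.refl J)
    exact c1.units_inv_right.eq
  have hAv : A v = J w := by
    rw [hAapp v]
    calc (↑u⁻¹ : Euc n →L[ℝ] Euc n) (J v)
        = ((↑u⁻¹ * J : Euc n →L[ℝ] Euc n)) v := rfl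
      _ = ((J * ↑u⁻¹ : Euc n →L[ℝ] Euc n)) v := by rw [hcomm]
      _ = J w := rfl
  have hinner : ⟪gradient (fun y => L (F y)) x, v⟫ = ⟪v, w⟫ := by
    rw [key, hLF.fderiv]
    have h1 : ((fderiv ℝ L (F x)).comp A) v = fderiv ℝ L (F x) (A v) := rfl
    rw [h1, hAv, ← key L (F x) (J w), ← hδ,
      ← ContinuousLinearMap.adjoint_inner_left J w δ, ← hv]
  have hvw : v = w - J w := by
    have h1 : (↑u : Euc n →L[ℝ] Euc n) w = v := huv v
    rw [← h1, huval]
    simp [sub_apply, one_apply]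
  have hmain : ⟪v, w⟫ = ‖w‖ ^ 2 - ⟪J w, w⟫ := by
    rw [hvw, inner_sub_left, real_inner_self_eq_norm_sq]
  have hJw : ⟪J w, w⟫ ≤ ‖J‖ * ‖w‖ * ‖w‖ := by
    calc ⟪J w, w⟫ ≤ ‖J w‖ * ‖w‖ := real_inner_le_norm _ _
    _ ≤ ‖J‖ * ‖w‖ * ‖w‖ := by
        have := J.le_opNorm w
        nlinarith [norm_nonneg w]
  have hsq : ‖w‖ ^ 2 = ‖w‖ * ‖w‖ := sq ‖w‖
  constructor
  · rw [hinner, hmain]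
    nlinarith [hJw, norm_nonneg w, hJnorm, hsq]
  · intro h0
    rw [hinner, hmain] at h0
    have hw0 : w = 0 := by
      have h2 : ‖w‖ ^ 2 ≤ 0 := by nlinarith [hJw, norm_nonneg w, hJnorm, hsq]
      have hn : ‖w‖ = 0 := sq_eq_zero_iff.mp (le_antisymm h2 (sq_nonneg _))
      simpa using hn
    rw [hvw, hw0]
    simp
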